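/- For the time-reversed planar system (t → -t), the cone Q⁻ = {(x,y) : y² ≥ x²} is forward invariant as long as cos(κt) > 0, and solutions starting in Q⁻ with y0² ≥ 1/(2ε t1) blow up backward in time under the hypothesis cos(κt) - |sin(κt)| > ε on [-t1, 0]. -/

import Mathlib

private lemma coneAux (κ : ℝ) (x y : ℝ → ℝ) (s t : ℝ) (hst : s ≤ t)
    (hd : ∀ u ∈ Set.Icc s t,
        HasDerivAt x
          (x u * (1 + Real.cos (κ * u) * ((x u) ^ 2 + (y u) ^ 2)) +
            Real.sin (κ * u) * ((x u) ^ 2 + (y u) ^ 2) * y u) u ∧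
        HasDerivAt y
          (-(y u) * (1 + Real.cos (κ * u) * ((x u) ^ 2 + (y u) ^ 2)) +
            Real.sin (κ * u) * ((x u) ^ 2 + (y u) ^ 2) * x u) u)
    (hcos : ∀ u ∈ Set.Icc s t, 0 < Real.cos (κ * u))
    (hyx : (y t) ^ 2 ≥ (x t) ^ 2) : (y s) ^ 2 ≥ (x s) ^ 2 := by
  set V : ℝ → ℝ := fun u => y u ^ 2 - x u ^ 2 with hVdef
  have hV : ∀ u ∈ Set.Icc s t, HasDerivAt V
      (2 * y u * (-(y u) * (1 + Real.cos (κ * u) * ((x u) ^ 2 + (y u) ^ 2)) +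
            Real.sin (κ * u) * ((x u) ^ 2 + (y u) ^ 2) * x u)
       - 2 * x u * (x u * (1 + Real.cos (κ * u) * ((x u) ^ 2 + (y u) ^ 2)) +
            Real.sin (κ * u) * ((x u) ^ 2 + (y u) ^ 2) * y u)) u := by
    intro u hu
    have h := ((hd u hu).2.pow 2).sub ((hd u hu).1.pow 2)
    convert h using 1
    · rfl
    · rfl
    · rfl
    push_cast
    ring
  have hanti : AntitoneOn V (Set.Icc s t) := by
    apply antitoneOn_of_deriv_nonpos (convex_Icc s t)
    · intro u hu; exact (hV u hu).continuousAt.continuousWithinAt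
    · intro u hu
      rw [interior_Icc] at hu
      exact (hV u (Set.Ioo_subset_Icc_self hu)).differentiableAt.differentiableWithinAt
    · intro u hu
      rw [interior_Icc] at hu
      have hu' := Set.Ioo_subset_Icc_self hu
      rw [(hV u hu').deriv]
      have hc := hcos u hu'
      have hr : (0:ℝ) ≤ x u ^ 2 + y u ^ 2 := by positivity
      nlinarith [mul_nonneg hr (mul_nonneg hc.le hr)]
  have := hanti ⟨le_rfl, hst⟩ ⟨hst, le_rfl⟩ hst
  simp only [hVdef] at this
  linarith

theorem stmt_18 (κ ε t1 x0 y0 : ℝ) (ht1 : 0 < t1) (hε : 0 < ε) :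
    (∀ x y : ℝ → ℝ,
      (∀ t : ℝ,
        HasDerivAt x
          (x t * (1 + Real.cos (κ * t) * ((x t) ^ 2 + (y t) ^ 2)) +
            Real.sin (κ * t) * ((x t) ^ 2 + (y t) ^ 2) * y t) t ∧
        HasDerivAt y
          (-(y t) * (1 + Real.cos (κ * t) * ((x t) ^ 2 + (y t) ^ 2)) +
            Real.sin (κ * t) * ((x t) ^ 2 + (y t) ^ 2) * x t) t) →
      ∀ s t : ℝ, s ≤ t → (∀ u ∈ Set.Icc s t, 0 < Real.cos (κ * u)) →
        (y t) ^ 2 ≥ (x t) ^ 2 → (y s) ^ 2 ≥ (x s) ^ 2) ∧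
    ((∀ t ∈ Set.Icc (-t1) (0 : ℝ),
        Real.cos (κ * t) - |Real.sin (κ * t)| > ε) →
      y0 ^ 2 ≥ x0 ^ 2 → y0 ^ 2 ≥ 1 / (2 * ε * t1) →
      ¬ ∃ x y : ℝ → ℝ, x 0 = x0 ∧ y 0 = y0 ∧
        ∀ t ∈ Set.Icc (-t1) (0 : ℝ),
          HasDerivAt x
            (x t * (1 + Real.cos (κ * t) * ((x t) ^ 2 + (y t) ^ 2)) +
              Real.sin (κ * t) * ((x t) ^ 2 + (y t) ^ 2) * y t) t ∧
          HasDerivAt y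
            (-(y t) * (1 + Real.cos (κ * t) * ((x t) ^ 2 + (y t) ^ 2)) +
              Real.sin (κ * t) * ((x t) ^ 2 + (y t) ^ 2) * x t) t) := by
  constructor
  · intro x y hd s t hst hcos hyx
    exact coneAux κ x y s t hst (fun u _ => hd u) hcos hyx
  · intro hcos hyx0 hbig ⟨x, y, hx0, hy0, hd⟩
    have hmt1 : (-t1 : ℝ) ≤ 0 := by linarith
    have hmem0 : (0:ℝ) ∈ Set.Icc (-t1) (0:ℝ) := ⟨hmt1, le_rfl⟩
    -- the cone holds on the whole interval
    have cone : ∀ t ∈ Set.Icc (-t1) (0:ℝ), (x t) ^ 2 ≤ (y t) ^ 2 := by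
      intro t ht
      refine coneAux κ x y t 0 ht.2
        (fun u hu => hd u ⟨le_trans ht.1 hu.1, hu.2⟩)
        (fun u hu => ?_) ?_
      · have h := hcos u ⟨le_trans ht.1 hu.1, hu.2⟩
        have := abs_nonneg (Real.sin (κ * u))
        linarith
      · rw [hx0, hy0]; exact hyx0
    -- derivative of W = y^2 and its bound
    set Dy : ℝ → ℝ := fun t => 2 * y t *
      (-(y t) * (1 + Real.cos (κ * t) * ((x t) ^ 2 + (y t) ^ 2)) +
        Real.sin (κ * t) * ((x t) ^ 2 + (y t) ^ 2) * x t) with hDydef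
    have hWd : ∀ t ∈ Set.Icc (-t1) (0:ℝ),
        HasDerivAt (fun u => y u ^ 2) (Dy t) t := by
      intro t ht
      have h := (hd t ht).2.pow 2
      convert h using 1
      · rfl
      · rfl
      · rfl
      push_cast
      ring
    have hbound : ∀ t ∈ Set.Icc (-t1) (0:ℝ), Dy t ≤ -2 * ε * (y t ^ 2) ^ 2 := by
      intro t ht
      have h1 := cone t ht
      have hc := hcos t ht
      have hs : Real.sin (κ * t) * (x t * y t) ≤ |Real.sin (κ * t)| * y t ^ 2 := by
        calc Real.sin (κ * t) * (x t * y t) ≤ |Real.sin (κ * t) * (x t * y t)| :=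
              le_abs_self _
          _ = |Real.sin (κ * t)| * (|x t| * |y t|) := by rw [abs_mul, abs_mul]
          _ ≤ |Real.sin (κ * t)| * y t ^ 2 := by
              apply mul_le_mul_of_nonneg_left _ (abs_nonneg _)
              nlinarith [sq_abs (x t), sq_abs (y t), abs_nonneg (x t),
                abs_nonneg (y t), sq_nonneg (|x t| - |y t|)]
      have hr : (0:ℝ) ≤ x t ^ 2 + y t ^ 2 := by positivity
      have h2 : Real.sin (κ * t) * (x t * y t) * (x t ^ 2 + y t ^ 2) ≤
          (|Real.sin (κ * t)| * y t ^ 2) * (x t ^ 2 + y t ^ 2) :=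
        mul_le_mul_of_nonneg_right hs hr
      have hb2 : (0:ℝ) ≤ y t ^ 2 := sq_nonneg _
      simp only [hDydef]
      nlinarith [mul_nonneg (mul_nonneg hb2 hr) (by linarith :
          (0:ℝ) ≤ Real.cos (κ * t) - |Real.sin (κ * t)| - ε),
        mul_nonneg (mul_nonneg hε.le hb2) (sq_nonneg (x t)), h2]
    -- W is antitone on the interval
    have hanti : AntitoneOn (fun u => y u ^ 2) (Set.Icc (-t1) (0:ℝ)) := by
      apply antitoneOn_of_deriv_nonpos (convex_Icc _ _)
      · intro u hu; exact (hWd u hu).continuousAt.continuousWithinAt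
      · intro u hu
        rw [interior_Icc] at hu
        exact (hWd u (Set.Ioo_subset_Icc_self hu)).differentiableAt.differentiableWithinAt
      · intro u hu
        rw [interior_Icc] at hu
        have hu' := Set.Ioo_subset_Icc_self hu
        rw [(hWd u hu').deriv]
        have := hbound u hu'
        nlinarith [sq_nonneg (y u ^ 2)]
    have h2et1 : (0:ℝ) < 2 * ε * t1 := by positivity
    have hy0pos : (0:ℝ) < y0 ^ 2 := lt_of_lt_of_le (by positivity) hbig
    have hWpos : ∀ t ∈ Set.Icc (-t1) (0:ℝ), (0:ℝ) < y t ^ 2 := by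
      intro t ht
      have := hanti ht hmem0 ht.2
      simp only at this
      rw [hy0] at this
      linarith
    -- h = 1/W - 2εt is monotone
    set h : ℝ → ℝ := fun t => (y t ^ 2)⁻¹ - 2 * ε * t with hhdef
    have hhd : ∀ t ∈ Set.Icc (-t1) (0:ℝ),
        HasDerivAt h (-Dy t / (y t ^ 2) ^ 2 - 2 * ε) t := by
      intro t ht
      have h1 := (hWd t ht).inv (ne_of_gt (hWpos t ht))
      have h2 : HasDerivAt (fun u : ℝ => 2 * ε * u) (2 * ε) t := by
        simpa using (hasDerivAt_id t).const_mul (2 * ε)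
      exact h1.sub h2
    have hmono : MonotoneOn h (Set.Icc (-t1) (0:ℝ)) := by
      apply monotoneOn_of_deriv_nonneg (convex_Icc _ _)
      · intro u hu; exact (hhd u hu).continuousAt.continuousWithinAt
      · intro u hu
        rw [interior_Icc] at hu
        exact (hhd u (Set.Ioo_subset_Icc_self hu)).differentiableAt.differentiableWithinAt
      · intro u hu
        rw [interior_Icc] at hu
        have hu' := Set.Ioo_subset_Icc_self hu
        rw [(hhd u hu').deriv]
        have hb := hbound u hu'
        have hW2 : (0:ℝ) < (y u ^ 2) ^ 2 := pow_pos (hWpos u hu') 2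
        rw [sub_nonneg, le_div_iff₀ hW2]
        nlinarith
    have hle : h (-t1) ≤ h 0 := hmono ⟨le_rfl, hmt1⟩ hmem0 hmt1
    have hWmt1 : (0:ℝ) < y (-t1) ^ 2 := hWpos (-t1) ⟨le_rfl, hmt1⟩
    have hinv0 : (y 0 ^ 2)⁻¹ ≤ 2 * ε * t1 := by
      rw [hy0]
      rw [inv_le_comm₀ hy0pos h2et1]
      calc (2 * ε * t1)⁻¹ = 1 / (2 * ε * t1) := by rw [one_div]
        _ ≤ y0 ^ 2 := hbig
    have hinvpos : (0:ℝ) < (y (-t1) ^ 2)⁻¹ := inv_pos.mpr hWmt1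
    simp only [hhdef] at hle
    nlinarith
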